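/- arXiv:1706.03793 — 3 statements merged into one kernel-verified Lean document; each statement's English description precedes it below -/
import Mathlib

section
/- Fix an integer n > 1 and initial amplitudes ψ : ℤ_n → ℂ. Let E be a set of t_E-paths (a time-finite event with defining data (t_E, E)) and F a set of t_F-paths, and for t ≥ max(t_E, t_F) define D_t(E,F) = Σ_{γ ∈ E_t} Σ_{γ' ∈ F_t} a[γ]·conj(a[γ'])·δ_{γ(t), γ'(t)}, where δ is the Kronecker delta on the final sites. Then D_t(E,F) = D_{t+1}(E,F) for every t ≥ max(t_E, t_F); consequently D_t(E,F) is independent of t ≥ max(t_E, t_F). -/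
open scoped Classical

/-- `efn x = exp(2πi x)`. -/
noncomputable def efn (x : ℝ) : ℂ := Complex.exp (2 * Real.pi * Complex.I * x)

/-- `ω_n`: a (2n)-th root of unity for even `n`, an n-th root of unity for odd `n`. -/
noncomputable def omegaN (n : ℕ) : ℂ :=
  if Even n then efn (1 / (2 * n)) else efn (1 / n)

/-- `n' = 2n` for even `n`, `n' = n` for odd `n`. -/
def nPrime (n : ℕ) : ℕ := if Even n then 2 * n else n

/-- The `n`-site hopper transfer matrix `U(n)_{jk} = ω_n^{(j-k)^2}/√n`,
with `(j-k)^2` computed from the integer representatives in `{0,…,n-1}`. -/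
noncomputable def hopperU (n : ℕ) [NeZero n] : Matrix (ZMod n) (ZMod n) ℂ :=
  fun j k => omegaN n ^ (((j.val : ℤ) - (k.val : ℤ)).natAbs ^ 2) / (Real.sqrt n : ℂ)

/-- The amplitude `a[γ] = ψ_{γ(0)} ∏_{t'=0}^{t-1} U(n)_{γ(t') γ(t'+1)}` of a `t`-path. -/
noncomputable def amp (n : ℕ) [NeZero n] (ψ : ZMod n → ℂ) (t : ℕ)
    (γ : Fin (t + 1) → ZMod n) : ℂ :=
  ψ (γ 0) * ∏ k : Fin t, hopperU n (γ k.castSucc) (γ k.succ)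

/-- The (un-reduced) phase exponent `Σ_{t'=0}^{t-1} (γ(t') - γ(t'+1))²` of a `t`-path,
differences computed via the integer representatives. -/
def phaseSum (n : ℕ) [NeZero n] (t : ℕ) (γ : Fin (t + 1) → ZMod n) : ℤ :=
  ∑ k : Fin t, (((γ k.castSucc).val : ℤ) - ((γ k.succ).val : ℤ)) ^ 2

/-- Restriction of a `t`-path to a `t₀`-path (`t₀ ≤ t`). -/
def restrictPath (n : ℕ) {t₀ t : ℕ} (h : t₀ ≤ t) (γ : Fin (t + 1) → ZMod n) :
    Fin (t₀ + 1) → ZMod n :=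
  fun k => γ (Fin.castLE (Nat.succ_le_succ h) k)

/-- `s^t_{ifp}(E)`: the number of `t`-paths in `E_t` starting at `i`, ending at `f`,
with phase exponent `p` (mod `n'`). -/
noncomputable def sCount (n : ℕ) [NeZero n] {t₀ : ℕ} (t : ℕ) (h : t₀ ≤ t)
    (E : Set (Fin (t₀ + 1) → ZMod n)) (i f : ZMod n) (p : ℕ) : ℕ :=
  Set.ncard {γ : Fin (t + 1) → ZMod n |
    restrictPath n h γ ∈ E ∧ γ 0 = i ∧ γ (Fin.last t) = f ∧
    phaseSum n t γ % (nPrime n : ℤ) = (p : ℤ)}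

/-- The quantum measure at time `t` of a set `F` of `t`-paths:
`μ_t(F) = Σ_f |Σ_{γ ∈ F, γ(t)=f} a[γ]|²`. -/
noncomputable def mu (n : ℕ) [NeZero n] (ψ : ZMod n → ℂ) (t : ℕ)
    (F : Set (Fin (t + 1) → ZMod n)) : ℝ :=
  ∑ f : ZMod n, (‖∑ γ : Fin (t + 1) → ZMod n,
    if γ ∈ F ∧ γ (Fin.last t) = f then amp n ψ t γ else 0‖) ^ 2

/-- The decoherence functional evaluated at time `t ≥ max(t_E, t_F)`:
`D_t(E,F) = Σ_{γ ∈ E_t} Σ_{γ' ∈ F_t} a[γ]·conj(a[γ'])·δ_{γ(t),γ'(t)}`. -/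
noncomputable def Dfun (n : ℕ) [NeZero n] (ψ : ZMod n → ℂ) {tE tF : ℕ}
    (E : Set (Fin (tE + 1) → ZMod n)) (F : Set (Fin (tF + 1) → ZMod n))
    (t : ℕ) (hE : tE ≤ t) (hF : tF ≤ t) : ℂ :=
  ∑ γ : Fin (t + 1) → ZMod n, ∑ γ' : Fin (t + 1) → ZMod n,
    if restrictPath n hE γ ∈ E ∧ restrictPath n hF γ' ∈ F ∧
        γ (Fin.last t) = γ' (Fin.last t) then
      amp n ψ t γ * (starRingEnd ℂ) (amp n ψ t γ')
    else 0

-- auxiliary lemmas (to be placed above stmt1)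

lemma abs_omega (n : ℕ) : ‖omegaN n‖ = 1 := by
  unfold omegaN efn
  split <;> simp [Complex.norm_exp, mul_comm, mul_assoc, mul_left_comm]

lemma conj_omega_mul (n : ℕ) : (starRingEnd ℂ) (omegaN n) * omegaN n = 1 := by
  rw [mul_comm, Complex.mul_conj, Complex.normSq_eq_norm_sq, abs_omega]; norm_num

lemma omega_ne (n : ℕ) : omegaN n ≠ 0 := by
  intro h; have := abs_omega n; rw [h] at this; simp at this

lemma conj_omega (n : ℕ) : (starRingEnd ℂ) (omegaN n) = (omegaN n)⁻¹ :=
  eq_inv_of_mul_eq_one_left (conj_omega_mul n)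

lemma prim (n : ℕ) (hn : 1 < n) : IsPrimitiveRoot (omegaN n ^ 2) n := by
  have h0 : (n : ℝ) ≠ 0 := by positivity
  unfold omegaN efn
  by_cases h : Even n
  · simp only [h, if_true]
    have : Complex.exp (2 * Real.pi * Complex.I * ((1 : ℝ) / (2 * n) : ℝ)) ^ 2
        = Complex.exp (2 * Real.pi * Complex.I / n) := by
      rw [← Complex.exp_nat_mul]; congr 1; push_cast; field_simp
    rw [this]
    exact Complex.isPrimitiveRoot_exp n (by omega)
  · simp only [h, if_false]
    have : Complex.exp (2 * Real.pi * Complex.I * ((1 : ℝ) / n : ℝ)) ^ 2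
        = Complex.exp (2 * Real.pi * Complex.I * ((2:ℕ) / n : ℂ)) := by
      rw [← Complex.exp_nat_mul]; congr 1; push_cast; field_simp
    rw [this]
    exact Complex.isPrimitiveRoot_exp_of_coprime 2 n (by omega)
      (Nat.coprime_two_left.mpr (Nat.not_even_iff_odd.mp h))

lemma omega_natAbs_sq (n : ℕ) (x : ℤ) :
    omegaN n ^ (x.natAbs ^ 2) = omegaN n ^ (x ^ 2) := by
  rw [← Int.natAbs_pow, ← zpow_natCast, Int.natAbs_of_nonneg (sq_nonneg x)]

lemma hopper_unitary (n : ℕ) [NeZero n] (hn : 1 < n) (j k : ZMod n) :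
    ∑ f : ZMod n, hopperU n j f * (starRingEnd ℂ) (hopperU n k f)
      = if j = k then 1 else 0 := by
  have hn0 : (0:ℝ) ≤ (n:ℝ) := by positivity
  have hs : (Real.sqrt n : ℂ) * (Real.sqrt n : ℂ) = (n : ℂ) := by
    rw [← Complex.ofReal_mul, Real.mul_self_sqrt hn0]; push_cast; ring
  have hsne : (Real.sqrt n : ℂ) ≠ 0 :=
    Complex.ofReal_ne_zero.mpr (ne_of_gt (Real.sqrt_pos.mpr
      (by exact_mod_cast Nat.lt_of_lt_of_le Nat.zero_lt_one hn.le)))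
  have hnne : (n : ℂ) ≠ 0 := by
    simpa using (NeZero.ne n)
  by_cases hjk : j = k
  · subst hjk
    simp only [if_true]
    have habs : ∀ f : ZMod n, hopperU n j f * (starRingEnd ℂ) (hopperU n j f) = 1 / (n:ℂ) := by
      intro f
      rw [Complex.mul_conj, Complex.normSq_eq_norm_sq]
      have h1 : ‖hopperU n j f‖ = 1 / Real.sqrt n := by
        unfold hopperU
        rw [norm_div, norm_pow, abs_omega, one_pow,
          Complex.norm_of_nonneg (Real.sqrt_nonneg _)]
      rw [h1, div_pow, one_pow, Real.sq_sqrt hn0]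
      push_cast
      ring
    rw [Finset.sum_congr rfl (fun f _ => habs f)]
    rw [Finset.sum_const, Finset.card_univ, ZMod.card n, nsmul_eq_mul]
    field_simp
  · simp only [hjk, if_false]
    set ω := omegaN n
    set ζ := ω ^ 2 with hζ
    have hprim : IsPrimitiveRoot ζ n := prim n hn
    set d : ℤ := (j.val : ℤ) - (k.val : ℤ) with hd
    have hdne : d ≠ 0 := by
      simp only [hd, sub_ne_zero]
      exact_mod_cast fun h => hjk (ZMod.val_injective n (by exact_mod_cast h))
    set x : ℂ := ζ ^ (-d) with hx
    have hterm : ∀ f : ZMod n, hopperU n j f * (starRingEnd ℂ) (hopperU n k f)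
        = ω ^ ((j.val:ℤ)^2 - (k.val:ℤ)^2) / n * x ^ (f.val) := by
      intro f
      have hxpow : x ^ (f.val) = ω ^ (2 * (-d) * (f.val : ℤ)) := by
        rw [hx, ← zpow_natCast (ζ ^ (-d)), ← zpow_mul, hζ, ← zpow_natCast ω 2,
          ← zpow_mul, mul_assoc]; norm_num
      unfold hopperU
      rw [map_div₀, Complex.conj_ofReal, map_pow, conj_omega, inv_pow,
        omega_natAbs_sq, omega_natAbs_sq, ← zpow_neg,
        div_mul_div_comm, hs, ← zpow_add₀ (omega_ne n), hxpow,
        div_mul_eq_mul_div, ← zpow_add₀ (omega_ne n)]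
      congr 2
      rw [hd]; ring
    rw [Finset.sum_congr rfl (fun f _ => hterm f), ← Finset.mul_sum]
    have hxsum : ∑ f : ZMod n, x ^ (f.val) = ∑ m ∈ Finset.range n, x ^ m := by
      refine Finset.sum_nbij' (fun f => f.val) (fun m => (m : ZMod n)) ?_ ?_ ?_ ?_ ?_
      · intro f _; exact Finset.mem_range.mpr (ZMod.val_lt f)
      · intro m _; exact Finset.mem_univ _
      · intro f _; exact ZMod.natCast_zmod_val f
      · intro m hm; exact ZMod.val_natCast_of_lt (Finset.mem_range.mp hm)
      · intro f _; rfl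
    have hxne : x ≠ 1 := by
      intro h1
      have h2 : ζ ^ d = 1 := by
        rwa [hx, zpow_neg, inv_eq_one] at h1
      have hdvd : (n:ℤ) ∣ d := (hprim.zpow_eq_one_iff_dvd d).mp h2
      have h1' : d.natAbs < n := by
        have := ZMod.val_lt j; have := ZMod.val_lt k
        omega
      have h2' : n ∣ d.natAbs := Int.natCast_dvd_natCast.mp (by rwa [Int.dvd_natAbs])
      have := Nat.le_of_dvd (by omega) h2'
      omega
    have hxn : x ^ n = 1 := by
      rw [hx, ← zpow_natCast, ← zpow_mul, mul_comm, zpow_mul, zpow_natCast,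
        hprim.pow_eq_one, one_zpow]
    rw [hxsum, geom_sum_eq hxne, hxn]
    simp

def pathSnocEquiv (n t : ℕ) : ((Fin (t + 1) → ZMod n) × ZMod n) ≃ (Fin (t + 2) → ZMod n) where
  toFun p := Fin.snoc p.1 p.2
  invFun γ := (Fin.init γ, γ (Fin.last _))
  left_inv p := by simp [Fin.init_snoc, Fin.snoc_last]
  right_inv γ := by simp [Fin.snoc_init_self]

lemma amp_snoc (n : ℕ) [NeZero n] (ψ : ZMod n → ℂ) (t : ℕ)
    (δ : Fin (t + 1) → ZMod n) (f : ZMod n) :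
    amp n ψ (t + 1) (Fin.snoc δ f) = amp n ψ t δ * hopperU n (δ (Fin.last t)) f := by
  unfold amp
  rw [Fin.prod_univ_castSucc]
  have h0 : (Fin.snoc δ f : Fin (t+2) → ZMod n) 0 = δ 0 := by
    have h : (0 : Fin (t+2)) = Fin.castSucc 0 := rfl
    rw [h, Fin.snoc_castSucc]
  have h1 : ∀ i : Fin t,
      hopperU n ((Fin.snoc δ f : Fin (t+2) → ZMod n) (Fin.castSucc i).castSucc)
        ((Fin.snoc δ f : Fin (t+2) → ZMod n) (Fin.castSucc i).succ)
      = hopperU n (δ i.castSucc) (δ i.succ) := by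
    intro i
    rw [Fin.succ_castSucc, Fin.snoc_castSucc, Fin.snoc_castSucc]
  rw [h0, Fin.succ_last, Fin.snoc_last, Fin.snoc_castSucc,
    Finset.prod_congr rfl (fun i _ => h1 i), ← mul_assoc]

lemma restrict_snoc (n : ℕ) {t₀ t : ℕ} (h : t₀ ≤ t)
    (δ : Fin (t + 1) → ZMod n) (f : ZMod n) :
    restrictPath n (le_trans h (Nat.le_succ t)) (Fin.snoc δ f) = restrictPath n h δ := by
  funext k
  unfold restrictPath
  have : Fin.castLE (Nat.succ_le_succ (le_trans h (Nat.le_succ t))) k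
      = Fin.castSucc (Fin.castLE (Nat.succ_le_succ h) k) := by
    apply Fin.ext; simp
  rw [this, Fin.snoc_castSucc]

lemma Dstep (n : ℕ) [NeZero n] (hn : 1 < n) (ψ : ZMod n → ℂ)
    {tE tF : ℕ} (E : Set (Fin (tE + 1) → ZMod n)) (F : Set (Fin (tF + 1) → ZMod n))
    (t : ℕ) (hE : tE ≤ t) (hF : tF ≤ t) :
    Dfun n ψ E F (t + 1) (le_trans hE (Nat.le_succ t)) (le_trans hF (Nat.le_succ t))
      = Dfun n ψ E F t hE hF := by
  have reidx : ∀ g : (Fin (t+2) → ZMod n) → ℂ,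
      ∑ γ, g γ = ∑ δ : Fin (t+1) → ZMod n, ∑ f : ZMod n, g (Fin.snoc δ f) := by
    intro g
    rw [← Equiv.sum_comp (pathSnocEquiv n t) g, Fintype.sum_prod_type]
    rfl
  have reidx2 : ∀ h : (Fin (t+2) → ZMod n) → (Fin (t+2) → ZMod n) → ℂ,
      ∑ γ, ∑ γ', h γ γ' = ∑ δ : Fin (t+1) → ZMod n, ∑ δ' : Fin (t+1) → ZMod n,
        ∑ f : ZMod n, ∑ f' : ZMod n, h (Fin.snoc δ f) (Fin.snoc δ' f') := by
    intro h
    rw [reidx (fun γ => ∑ γ', h γ γ')]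
    refine Finset.sum_congr rfl (fun δ _ => ?_)
    rw [Finset.sum_congr rfl (fun f (_ : f ∈ Finset.univ) => reidx (h (Fin.snoc δ f)))]
    rw [Finset.sum_comm]
  unfold Dfun
  refine (reidx2 _).trans ?_
  refine Finset.sum_congr rfl (fun δ _ => ?_)
  refine Finset.sum_congr rfl (fun δ' _ => ?_)
  -- now: ∑ f, ∑ f', ite ... = ite ...
  have hlast : ∀ f : ZMod n, (Fin.snoc δ f : Fin (t+2) → ZMod n) (Fin.last (t+1)) = f :=
    fun f => Fin.snoc_last _ _
  have hlast' : ∀ f : ZMod n, (Fin.snoc δ' f : Fin (t+2) → ZMod n) (Fin.last (t+1)) = f :=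
    fun f => Fin.snoc_last _ _
  by_cases hPQ : restrictPath n hE δ ∈ E ∧ restrictPath n hF δ' ∈ F
  · have hsimp : ∀ f f' : ZMod n,
        (if restrictPath n (le_trans hE (Nat.le_succ t)) (Fin.snoc δ f) ∈ E ∧
            restrictPath n (le_trans hF (Nat.le_succ t)) (Fin.snoc δ' f') ∈ F ∧
            (Fin.snoc δ f : Fin (t+2) → ZMod n) (Fin.last (t+1)) =
              (Fin.snoc δ' f' : Fin (t+2) → ZMod n) (Fin.last (t+1)) then
          amp n ψ (t+1) (Fin.snoc δ f) * (starRingEnd ℂ) (amp n ψ (t+1) (Fin.snoc δ' f'))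
        else 0)
        = (if f = f' then
            amp n ψ t δ * (starRingEnd ℂ) (amp n ψ t δ') *
              (hopperU n (δ (Fin.last t)) f * (starRingEnd ℂ) (hopperU n (δ' (Fin.last t)) f'))
          else 0) := by
      intro f f'
      rw [restrict_snoc n hE δ f, restrict_snoc n hF δ' f', hlast, hlast', amp_snoc, amp_snoc]
      simp only [hPQ.1, hPQ.2, true_and, map_mul]
      split <;> [ring; rfl]
    calc ∑ f : ZMod n, ∑ f' : ZMod n,
          (if restrictPath n (le_trans hE (Nat.le_succ t)) (Fin.snoc δ f) ∈ E ∧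
              restrictPath n (le_trans hF (Nat.le_succ t)) (Fin.snoc δ' f') ∈ F ∧
              (Fin.snoc δ f : Fin (t+2) → ZMod n) (Fin.last (t+1)) =
                (Fin.snoc δ' f' : Fin (t+2) → ZMod n) (Fin.last (t+1)) then
            amp n ψ (t+1) (Fin.snoc δ f) * (starRingEnd ℂ) (amp n ψ (t+1) (Fin.snoc δ' f'))
          else 0)
        = ∑ f : ZMod n,
            amp n ψ t δ * (starRingEnd ℂ) (amp n ψ t δ') *
              (hopperU n (δ (Fin.last t)) f * (starRingEnd ℂ) (hopperU n (δ' (Fin.last t)) f)) := by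
          refine Finset.sum_congr rfl (fun f _ => ?_)
          rw [Finset.sum_congr rfl (fun f' _ => hsimp f f')]
          rw [Finset.sum_ite_eq]
          simp
      _ = amp n ψ t δ * (starRingEnd ℂ) (amp n ψ t δ') *
            (if δ (Fin.last t) = δ' (Fin.last t) then 1 else 0) := by
          rw [← Finset.mul_sum, hopper_unitary n hn]
      _ = (if restrictPath n hE δ ∈ E ∧ restrictPath n hF δ' ∈ F ∧
              δ (Fin.last t) = δ' (Fin.last t) then
            amp n ψ t δ * (starRingEnd ℂ) (amp n ψ t δ')
          else 0) := by
          simp only [hPQ.1, hPQ.2, true_and]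
          split <;> simp
  · have : ∀ f f' : ZMod n,
        (if restrictPath n (le_trans hE (Nat.le_succ t)) (Fin.snoc δ f) ∈ E ∧
            restrictPath n (le_trans hF (Nat.le_succ t)) (Fin.snoc δ' f') ∈ F ∧
            (Fin.snoc δ f : Fin (t+2) → ZMod n) (Fin.last (t+1)) =
              (Fin.snoc δ' f' : Fin (t+2) → ZMod n) (Fin.last (t+1)) then
          amp n ψ (t+1) (Fin.snoc δ f) * (starRingEnd ℂ) (amp n ψ (t+1) (Fin.snoc δ' f'))
        else 0) = 0 := by
      intro f f'
      rw [restrict_snoc n hE δ f, restrict_snoc n hF δ' f']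
      rw [if_neg]
      intro ⟨h1, h2, _⟩
      exact hPQ ⟨h1, h2⟩
    rw [Finset.sum_congr rfl (fun f _ => Finset.sum_congr rfl (fun f' _ => this f f'))]
    rw [if_neg (fun ⟨h1, h2, _⟩ => hPQ ⟨h1, h2⟩)]
    simp

/-- For `t ≥ max(t_E,t_F)`, `D_t(E,F) = D_{t+1}(E,F)`; consequently
`D_t(E,F)` is independent of `t ≥ max(t_E,t_F)`. -/
theorem stmt1 (n : ℕ) [NeZero n] (hn : 1 < n) (ψ : ZMod n → ℂ)
    {tE tF : ℕ} (E : Set (Fin (tE + 1) → ZMod n)) (F : Set (Fin (tF + 1) → ZMod n)) :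
    (∀ (t : ℕ) (hE : tE ≤ t) (hF : tF ≤ t),
      Dfun n ψ E F t hE hF =
        Dfun n ψ E F (t + 1) (le_trans hE (Nat.le_succ t)) (le_trans hF (Nat.le_succ t))) ∧
    (∀ (t t' : ℕ) (hE : tE ≤ t) (hF : tF ≤ t) (hE' : tE ≤ t') (hF' : tF ≤ t'),
      Dfun n ψ E F t hE hF = Dfun n ψ E F t' hE' hF') := by
  have step : ∀ (t : ℕ) (hE : tE ≤ t) (hF : tF ≤ t),
      Dfun n ψ E F t hE hF =
        Dfun n ψ E F (t + 1) (le_trans hE (Nat.le_succ t)) (le_trans hF (Nat.le_succ t)) :=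
    fun t hE hF => (Dstep n hn ψ E F t hE hF).symm
  refine ⟨step, ?_⟩
  have key : ∀ (k t : ℕ) (hE : tE ≤ t) (hF : tF ≤ t),
      Dfun n ψ E F t hE hF = Dfun n ψ E F (t + k)
        (le_trans hE (Nat.le_add_right t k)) (le_trans hF (Nat.le_add_right t k)) := by
    intro k
    induction k with
    | zero => intro t hE hF; rfl
    | succ k ih =>
      intro t hE hF
      rw [ih t hE hF, step (t + k) (le_trans hE (Nat.le_add_right t k))
        (le_trans hF (Nat.le_add_right t k))]
      rfl
  intro t t' hE hF hE' hF'
  rcases le_total t t' with h | h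
  · obtain ⟨k, rfl⟩ := Nat.exists_eq_add_of_le h
    exact key k t hE hF
  · obtain ⟨k, rfl⟩ := Nat.exists_eq_add_of_le h
    exact (key k t' hE' hF').symm
end

section
/- Fix an integer n > 1 and let E be a set of t₀-paths (a time-finite event with defining data (t₀, E)). For every t ≥ t₀ + 2n − 1, every i, f ∈ ℤ_n and every p ∈ ℤ_{n,i,f}, the count s^t_{ifp}(E) satisfies s^t_{ifp}(E) ≥ c_i(E) · n^{t − t₀ − 2n + 1}, where c_i(E) is the number of t₀-paths in E that start at site i. -/
open scoped Classical

/-- The set of residues `ℤ_{n,i,f}`: all of `{0,…,n-1}` for odd `n`; for even `n`, the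
residues in `{0,…,2n-1}` whose parity is that of `i - f` (parity via the integer
representatives, so the parity of `i.val + f.val`). -/
def Znif (n : ℕ) [NeZero n] (i f : ZMod n) : Set ℕ :=
  if Even n then {p | p < 2 * n ∧ p % 2 = (i.val + f.val) % 2}
  else {p | p < n}


/-- telescoping parity of sum of squared differences -/
lemma tele_par (g : ℕ → ℤ) (s : ℕ) :
    (∑ k ∈ Finset.range s, (g k - g (k+1))^2) % 2 = (g 0 + g s) % 2 := by
  induction s with
  | zero => simp; omega
  | succ s ih =>
    rw [Finset.sum_range_succ]
    have h1 : (2:ℤ) ∣ (g s - g (s+1))^2 - (g s + g (s+1)) := by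
      have h2 : Even ((g s - g (s+1)) * ((g s - g (s+1)) + 1)) := Int.even_mul_succ_self _
      rcases h2 with ⟨u, hu⟩
      exact ⟨u - g s, by ring_nf; ring_nf at hu; omega⟩
    omega

/-- step phase depends only on the difference in `ZMod n` -/
lemma step_phase (n : ℕ) [NeZero n] (x y : ZMod n) :
    ((((x.val : ℤ) - y.val)^2 - (((x - y).val : ℤ))^2)) % (nPrime n : ℤ) = 0 := by
  have hn : 0 < n := Nat.pos_of_ne_zero (NeZero.ne n)
  have hx := ZMod.val_lt x
  have hy := ZMod.val_lt y
  have hv := ZMod.val_lt (x - y)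
  have hdvd : (n : ℤ) ∣ ((x.val : ℤ) - y.val - ((x - y).val : ℤ)) := by
    have : (((x.val : ℤ) - y.val - ((x - y).val : ℤ) : ℤ) : ZMod n) = 0 := by
      push_cast
      rw [ZMod.natCast_val, ZMod.natCast_val, ZMod.natCast_val]
      simp [ZMod.cast_id]
    exact (ZMod.intCast_zmod_eq_zero_iff_dvd _ n).mp this
  obtain ⟨k, hk⟩ := hdvd
  have hk01 : k = 0 ∨ k = -1 := by
    rcases lt_trichotomy k 0 with h | h | h
    · right
      by_contra hne
      have : k ≤ -2 := by omega
      nlinarith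
    · left; exact h
    · exfalso
      have : 1 ≤ k := h
      nlinarith
  rcases hk01 with h | h
  · subst h
    have : (x.val : ℤ) - y.val = ((x - y).val : ℤ) := by omega
    rw [this]; ring_nf; simp
  · subst h
    have he : (x.val : ℤ) - y.val = ((x - y).val : ℤ) - n := by omega
    rw [he]
    have : (((x - y).val : ℤ) - n)^2 - ((x - y).val : ℤ)^2 = n * (n - 2 * ((x-y).val : ℤ)) := by ring
    rw [this]
    rcases Nat.even_or_odd n with he2 | ho
    · have : nPrime n = 2 * n := by simp [nPrime, he2]
      rw [this]
      obtain ⟨u, hu⟩ := he2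
      apply Int.emod_eq_zero_of_dvd
      exact ⟨(u : ℤ) - ((x-y).val : ℤ), by push_cast [hu]; ring⟩
    · have : nPrime n = n := by simp [nPrime, Nat.not_even_iff_odd.mpr ho]
      rw [this]
      apply Int.emod_eq_zero_of_dvd
      exact ⟨(n:ℤ) - 2 * ((x-y).val:ℤ), rfl⟩


lemma counts_exist (n : ℕ) (hn : 1 < n) (m : ℕ) (hm : m < n) (r : ℤ)
    (hpar : n % 2 = 0 → (r - m) % 2 = 0) :
    ∃ c1 c2 c3 : ℕ, c1 + c2 + c3 ≤ 2*n - 1 ∧ (c3 ≠ 0 → 4 ≤ n) ∧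
      ((n:ℤ)) ∣ ((c1 : ℤ) + (c2:ℤ) * ((n:ℤ)-1) + 2 * (c3:ℤ) - (m:ℤ)) ∧
      ((nPrime n : ℤ)) ∣ ((c1:ℤ) + (c2:ℤ) + 4 * (c3:ℤ) - r) := by
  rcases Nat.even_or_odd n with he | ho
  · -- n even
    have hNP : nPrime n = 2 * n := by simp [nPrime, he]
    have h2 : n % 2 = 0 := Nat.even_iff.mp he
    have hpar' := hpar h2
    have hNpos : (0:ℤ) < 2 * n := by positivity
    set q : ℤ := r / (2 * (n:ℤ)) with hq
    have hdiv : 2 * (n:ℤ) * q + r % (2 * (n:ℤ)) = r := Int.mul_ediv_add_emod r _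
    have hr0 : 0 ≤ r % (2 * (n:ℤ)) := Int.emod_nonneg r (by omega)
    have hrlt : r % (2 * (n:ℤ)) < 2 * n := Int.emod_lt_of_pos r hNpos
    set r' : ℕ := (r % (2 * (n:ℤ))).toNat with hr'def
    have hr' : (r' : ℤ) = r % (2 * (n:ℤ)) := Int.toNat_of_nonneg hr0
    have hrlt' : r' < 2 * n := by omega
    have hparN : r' % 2 = m % 2 := by
      have hd2 : (2:ℤ) ∣ 2 * (n:ℤ) * q := ⟨(n:ℤ) * q, by ring⟩
      omega
    by_cases hc1 : m ≤ r'
    · -- case (a)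
      refine ⟨(r'+m)/2, (r'-m)/2, 0, by omega, by omega, ?_, ?_⟩
      · have humv : (((r'+m)/2 : ℕ):ℤ) - (((r'-m)/2 : ℕ):ℤ) = m := by omega
        exact ⟨(((r'-m)/2 : ℕ):ℤ), by linear_combination humv⟩
      · rw [hNP]
        have huv : (((r'+m)/2 : ℕ):ℤ) + (((r'-m)/2 : ℕ):ℤ) = r' := by omega
        exact ⟨-q, by simp only [Nat.cast_mul, Nat.cast_ofNat]; linear_combination huv + hdiv + hr'⟩
    · by_cases hc2 : n ≤ r' + m
      · -- case (b)
        refine ⟨(r'+m-n)/2, (r'+n-m)/2, 0, by omega, by omega, ?_, ?_⟩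
        · have humv : (((r'+m-n)/2 : ℕ):ℤ) - (((r'+n-m)/2 : ℕ):ℤ) = (m:ℤ) - n := by omega
          exact ⟨(((r'+n-m)/2 : ℕ):ℤ) - 1, by linear_combination humv⟩
        · rw [hNP]
          have huv : (((r'+m-n)/2 : ℕ):ℤ) + (((r'+n-m)/2 : ℕ):ℤ) = r' := by omega
          exact ⟨-q, by simp only [Nat.cast_mul, Nat.cast_ofNat]; linear_combination huv + hdiv + hr'⟩
      · -- case (c)
        have hn4 : 4 ≤ n := by omega
        set A : ℕ := (r' + 3)/3 with hA
        have hA1 : r' + 1 ≤ 3*A := by omega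
        have hA2 : 3*A ≤ r' + 3 := by omega
        have hng : r' + 6 ≤ 2*n + m := by omega
        refine ⟨(r' + 2*n + m - 6*A)/2, (r' + 2*n - m - 2*A)/2, A, by omega,
          fun _ => hn4, ?_, ?_⟩
        · have humv : (((r' + 2*n + m - 6*A)/2 : ℕ):ℤ) - (((r' + 2*n - m - 2*A)/2 : ℕ):ℤ)
              = (m:ℤ) - 2*A := by omega
          exact ⟨(((r' + 2*n - m - 2*A)/2 : ℕ):ℤ), by linear_combination humv⟩
        · rw [hNP]
          have huv : (((r' + 2*n + m - 6*A)/2 : ℕ):ℤ) + (((r' + 2*n - m - 2*A)/2 : ℕ):ℤ)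
              = (r':ℤ) + 2*n - 4*A := by omega
          exact ⟨1 - q, by simp only [Nat.cast_mul, Nat.cast_ofNat]; linear_combination huv + hdiv + hr'⟩
  · -- n odd
    have hNP : nPrime n = n := by simp [nPrime, Nat.not_even_iff_odd.mpr ho]
    have hodd : n % 2 = 1 := Nat.odd_iff.mp ho
    have hNpos : (0:ℤ) < (n:ℤ) := by omega
    set q : ℤ := r / (n:ℤ) with hq
    have hdiv : (n:ℤ) * q + r % (n:ℤ) = r := Int.mul_ediv_add_emod r _
    have hr0 : 0 ≤ r % (n:ℤ) := Int.emod_nonneg r (by omega)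
    have hrlt : r % (n:ℤ) < n := Int.emod_lt_of_pos r hNpos
    set r' : ℕ := (r % (n:ℤ)).toNat with hr'def
    have hr' : (r' : ℤ) = r % (n:ℤ) := Int.toNat_of_nonneg hr0
    have hrlt' : r' < n := by omega
    by_cases hc1 : (r' + n + m) % 2 = 0
    · refine ⟨(r'+n+m)/2, (r'+n-m)/2, 0, by omega, by omega, ?_, ?_⟩
      · have humv : (((r'+n+m)/2 : ℕ):ℤ) - (((r'+n-m)/2 : ℕ):ℤ) = m := by omega
        exact ⟨(((r'+n-m)/2 : ℕ):ℤ), by linear_combination humv⟩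
      · rw [hNP]
        have huv : (((r'+n+m)/2 : ℕ):ℤ) + (((r'+n-m)/2 : ℕ):ℤ) = (r':ℤ) + n := by omega
        exact ⟨1 - q, by linear_combination huv + hdiv + hr'⟩
    · refine ⟨(r'+m)/2, (r'+2*n-m)/2, 0, by omega, by omega, ?_, ?_⟩
      · have humv : (((r'+m)/2 : ℕ):ℤ) - (((r'+2*n-m)/2 : ℕ):ℤ) = (m:ℤ) - n := by omega
        exact ⟨(((r'+2*n-m)/2 : ℕ):ℤ) - 1, by linear_combination humv⟩
      · rw [hNP]
        have huv : (((r'+m)/2 : ℕ):ℤ) + (((r'+2*n-m)/2 : ℕ):ℤ) = (r':ℤ) + n := by omega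
        exact ⟨1 - q, by linear_combination huv + hdiv + hr'⟩

def dseq (n c1 c2 c3 : ℕ) : ℕ → ZMod n := fun k =>
  if k < c1 then 1 else if k < c1 + c2 then ((n-1 : ℕ) : ZMod n)
  else if k < c1 + c2 + c3 then 2 else 0

lemma dseq_sum {M : Type*} [AddCommMonoid M] (n c1 c2 c3 z : ℕ) (F : ZMod n → M) :
    ∑ k ∈ Finset.range (c1 + (c2 + (c3 + z))), F (dseq n c1 c2 c3 k) =
      c1 • F 1 + c2 • F ((n-1 : ℕ) : ZMod n) + c3 • F 2 + z • F 0 := by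
  rw [Finset.sum_range_add, Finset.sum_range_add, Finset.sum_range_add]
  have t1 : ∑ k ∈ Finset.range c1, F (dseq n c1 c2 c3 k) = c1 • F 1 := by
    have e : ∀ k ∈ Finset.range c1, F (dseq n c1 c2 c3 k) = F 1 := fun k hk => by
      simp only [Finset.mem_range] at hk
      simp only [dseq, if_pos hk]
    rw [Finset.sum_congr rfl e, Finset.sum_const, Finset.card_range]
  have t2 : ∑ k ∈ Finset.range c2, F (dseq n c1 c2 c3 (c1 + k))
      = c2 • F ((n-1 : ℕ) : ZMod n) := by
    have e : ∀ k ∈ Finset.range c2, F (dseq n c1 c2 c3 (c1 + k))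
        = F ((n-1 : ℕ) : ZMod n) := fun k hk => by
      simp only [Finset.mem_range] at hk
      simp only [dseq]
      rw [if_neg (by omega), if_pos (by omega)]
    rw [Finset.sum_congr rfl e, Finset.sum_const, Finset.card_range]
  have t3 : ∑ k ∈ Finset.range c3, F (dseq n c1 c2 c3 (c1 + (c2 + k))) = c3 • F 2 := by
    have e : ∀ k ∈ Finset.range c3, F (dseq n c1 c2 c3 (c1 + (c2 + k))) = F 2 :=
      fun k hk => by
      simp only [Finset.mem_range] at hk
      simp only [dseq]
      rw [if_neg (by omega), if_neg (by omega), if_pos (by omega)]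
    rw [Finset.sum_congr rfl e, Finset.sum_const, Finset.card_range]
  have t4 : ∑ k ∈ Finset.range z,
      F (dseq n c1 c2 c3 (c1 + (c2 + (c3 + k)))) = z • F 0 := by
    have e : ∀ k ∈ Finset.range z,
        F (dseq n c1 c2 c3 (c1 + (c2 + (c3 + k)))) = F 0 := fun k hk => by
      simp only [Finset.mem_range] at hk
      simp only [dseq]
      rw [if_neg (by omega), if_neg (by omega), if_neg (by omega)]
    rw [Finset.sum_congr rfl e, Finset.sum_const, Finset.card_range]
  rw [t1, t2, t3, t4]
  abel

lemma natCast_val_sub (n : ℕ) [NeZero n] (a f : ZMod n) :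
    (n:ℤ) ∣ (((a - f).val : ℤ) - ((a.val:ℤ) - (f.val:ℤ))) := by
  have h : ((((a - f).val : ℤ) - ((a.val:ℤ) - (f.val:ℤ)) : ℤ) : ZMod n) = 0 := by
    push_cast
    rw [ZMod.natCast_val, ZMod.natCast_val, ZMod.natCast_val]
    simp [ZMod.cast_id]
  exact (ZMod.intCast_zmod_eq_zero_iff_dvd _ n).mp h

lemma tail_exists (n : ℕ) [NeZero n] (hn : 1 < n) (a f : ZMod n) (r : ℤ)
    (hpar : n % 2 = 0 → (r - (a.val:ℤ) - (f.val:ℤ)) % 2 = 0) :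
    ∃ τ : ℕ → ZMod n, τ 0 = a ∧ (∀ j, 2*n-1 ≤ j → τ j = f) ∧
      ((∑ k ∈ Finset.range (2*n-1), (((τ k).val : ℤ) - ((τ (k+1)).val : ℤ))^2) - r)
        % (nPrime n : ℤ) = 0 := by
  haveI := Fact.mk hn
  have h1n : (1:ℕ) ≤ n := hn.le
  have hm : (a - f).val < n := ZMod.val_lt _
  set m := (a - f).val with hmdef
  have hmdvd := natCast_val_sub n a f
  have hpar' : n % 2 = 0 → (r - (m:ℤ)) % 2 = 0 := by
    intro h2
    have hpar2 := hpar h2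
    obtain ⟨k, hk⟩ := hmdvd
    have h2' : (2:ℤ) ∣ (n:ℤ) * k := by
      have h2n : (2:ℤ) ∣ (n:ℤ) := by exact_mod_cast Nat.dvd_of_mod_eq_zero h2
      exact h2n.mul_right k
    omega
  obtain ⟨c1, c2, c3, hle, hc34, hdvd1, hdvd2⟩ := counts_exist n hn m hm r hpar'
  obtain ⟨z, hz⟩ : ∃ z, 2*n-1 = c1 + (c2 + (c3 + z)) := ⟨2*n-1 - (c1+c2+c3), by omega⟩
  set D := dseq n c1 c2 c3 with hD
  set τ : ℕ → ZMod n := fun k => a - ∑ j ∈ Finset.range (min k (2*n-1)), D j with hτ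
  have hsum : ∑ j ∈ Finset.range (2*n-1), D j = a - f := by
    have hds := dseq_sum n c1 c2 c3 z (id : ZMod n → ZMod n)
    simp only [id_eq] at hds
    rw [hz, hds]
    simp only [nsmul_eq_mul, smul_zero, add_zero, mul_zero]
    have hcast : ((c1 : ZMod n)) * 1 + (c2:ZMod n) * ((n-1:ℕ):ZMod n) + (c3:ZMod n) * 2
        = (((c1 + c2*(n-1) + 2*c3 : ℕ)) : ZMod n) := by
      push_cast [Nat.cast_sub h1n]
      ring
    rw [hcast]
    have e : ((c1 + c2*(n-1) + 2*c3 : ℕ) : ℤ) = (c1:ℤ) + (c2:ℤ)*((n:ℤ)-1) + 2*(c3:ℤ) := by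
      push_cast [Nat.cast_sub h1n]
      ring
    have h0 : ((((c1 + c2*(n-1) + 2*c3 : ℕ) : ℤ) - (m:ℤ) : ℤ) : ZMod n) = 0 := by
      apply (ZMod.intCast_zmod_eq_zero_iff_dvd _ n).mpr
      rw [e]; exact hdvd1
    push_cast at h0
    rw [sub_eq_zero] at h0
    have hfin : ((c1 + c2*(n-1) + 2*c3 : ℕ) : ZMod n) = ((m:ℕ) : ZMod n) := by
      push_cast
      linear_combination h0
    rw [hfin, hmdef, ZMod.natCast_val, ZMod.cast_id]
  have hstep : ∀ k, k < 2*n-1 → τ k - τ (k+1) = D k := by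
    intro k hk
    have e1 : min k (2*n-1) = k := by omega
    have e2 : min (k+1) (2*n-1) = k+1 := by omega
    simp only [hτ, e1, e2, Finset.sum_range_succ]
    ring
  refine ⟨τ, ?_, ?_, ?_⟩
  · simp [hτ]
  · intro j hj
    have e1 : min j (2*n-1) = 2*n-1 := by omega
    simp only [hτ, e1, hsum]
    ring
  · set T := ∑ k ∈ Finset.range (2*n-1), (((τ k).val : ℤ) - ((τ (k+1)).val : ℤ))^2 with hT
    set P := ∑ k ∈ Finset.range (2*n-1), ((D k).val : ℤ)^2 with hPdef
    have hTP : (nPrime n : ℤ) ∣ (T - P) := by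
      rw [hT, hPdef, ← Finset.sum_sub_distrib]
      apply Finset.dvd_sum
      intro k hk
      simp only [Finset.mem_range] at hk
      have hs := step_phase n (τ k) (τ (k+1))
      rw [hstep k hk] at hs
      exact Int.dvd_of_emod_eq_zero hs
    have hX : ((n-1:ℕ):ZMod n).val = n - 1 := ZMod.val_cast_of_lt (by omega)
    have hP : P = (c1:ℤ) + (c2:ℤ) * ((n-1:ℕ):ℤ)^2 + (c3:ℤ) * (((2:ZMod n).val:ℤ))^2 := by
      rw [hPdef, hz, hD, dseq_sum n c1 c2 c3 z (fun x => ((x.val:ℤ))^2)]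
      simp only [ZMod.val_one, ZMod.val_zero, hX, nsmul_eq_mul]
      push_cast
      ring
    have hd2 : (nPrime n : ℤ) ∣ (P - ((c1:ℤ) + (c2:ℤ) + 4*(c3:ℤ))) := by
      have hsplit : P - ((c1:ℤ) + (c2:ℤ) + 4*(c3:ℤ))
          = (c2:ℤ) * (((n-1:ℕ):ℤ)^2 - 1) + (c3:ℤ) * ((((2:ZMod n).val:ℤ))^2 - 4) := by
        rw [hP]; ring
      rw [hsplit]
      apply dvd_add
      · apply Dvd.dvd.mul_left
        have e : ((n-1:ℕ):ℤ)^2 - 1 = (n:ℤ) * ((n:ℤ) - 2) := by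
          push_cast [Nat.cast_sub h1n]; ring
        rw [e]
        rcases Nat.even_or_odd n with he | ho
        · have hNP : nPrime n = 2 * n := by simp [nPrime, he]
          obtain ⟨u, hu⟩ := he
          rw [hNP]
          exact ⟨(u:ℤ) - 1, by push_cast [hu]; ring⟩
        · have hNP : nPrime n = n := by simp [nPrime, Nat.not_even_iff_odd.mpr ho]
          rw [hNP]
          exact ⟨(n:ℤ) - 2, rfl⟩
      · rcases eq_or_ne c3 0 with hc3 | hc3
        · simp [hc3]
        · have h4n : 4 ≤ n := hc34 hc3
          have hv2 : ((2:ZMod n)).val = 2 := by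
            have e2 : ((2:ℕ) : ZMod n) = (2 : ZMod n) := by push_cast; ring
            rw [← e2, ZMod.val_cast_of_lt (by omega)]
          rw [hv2]
          norm_num
    have hfinal : (nPrime n : ℤ) ∣ (T - r) := by
      have e : T - r = (T - P) + (P - ((c1:ℤ) + (c2:ℤ) + 4*(c3:ℤ)))
          + (((c1:ℤ) + (c2:ℤ) + 4*(c3:ℤ)) - r) := by ring
      rw [e]
      exact dvd_add (dvd_add hTP hd2) hdvd2
    exact Int.emod_eq_zero_of_dvd hfinal


/-- For `t ≥ t₀ + 2n - 1`, `i, f ∈ ℤ_n` and `p ∈ ℤ_{n,i,f}`,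
`s^t_{ifp}(E) ≥ c_i(E) · n^(t - t₀ - 2n + 1)`, where `c_i(E)` is the number of
`t₀`-paths in `E` starting at `i`. -/
theorem stmt4 (n : ℕ) [NeZero n] (hn : 1 < n) (t₀ : ℕ)
    (E : Set (Fin (t₀ + 1) → ZMod n)) (t : ℕ) (ht : t₀ + 2 * n - 1 ≤ t)
    (i f : ZMod n) (p : ℕ) (hp : p ∈ Znif n i f) :
    Set.ncard {γ : Fin (t₀ + 1) → ZMod n | γ ∈ E ∧ γ 0 = i} *
        n ^ (t - (t₀ + 2 * n - 1)) ≤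
      sCount n t (by omega) E i f p := by
  classical
  have hn0 : 0 < n := by omega
  have hZ : p < nPrime n ∧ (n % 2 = 0 → (p:ℤ) % 2 = ((i.val : ℤ) + (f.val:ℤ)) % 2) := by
    rcases Nat.even_or_odd n with he | ho
    · have hz : Znif n i f = {p | p < 2*n ∧ p % 2 = (i.val + f.val) % 2} := by
        simp [Znif, he]
      rw [hz] at hp
      simp only [Set.mem_setOf_eq] at hp
      obtain ⟨h1, h2⟩ := hp
      constructor
      · simp only [nPrime, if_pos he]; omega
      · intro _; omega
    · have hz : Znif n i f = {p | p < n} := by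
        simp [Znif, Nat.not_even_iff_odd.mpr ho]
      rw [hz] at hp
      simp only [Set.mem_setOf_eq] at hp
      have ho2 : n % 2 = 1 := Nat.odd_iff.mp ho
      constructor
      · simp only [nPrime, if_neg (Nat.not_even_iff_odd.mpr ho)]; omega
      · intro h; omega
  obtain ⟨K, hK1, hK2⟩ : ∃ K, t = t₀ + K + (2*n - 1) ∧ K = t - (t₀ + 2*n - 1) :=
    ⟨t - (t₀+2*n-1), by omega, rfl⟩
  rw [← hK2]
  have key : ∀ (δ : Fin (t₀+1) → ZMod n), δ ∈ E → δ 0 = i → ∀ c : Fin K → ZMod n,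
      ∃ γ : Fin (t+1) → ZMod n,
        γ 0 = i ∧ γ (Fin.last t) = f ∧
        (phaseSum n t γ % (nPrime n : ℤ) = (p:ℤ)) ∧
        (∀ k : Fin (t₀+1), γ (Fin.castLE (by omega) k) = δ k) ∧
        (∀ k : Fin K, γ (Fin.castLE (by omega) (k.addNat (t₀+1))) = c k) := by
    intro δ hδE hδ0 c
    set T := t₀ + K with hTdef
    set πhm : ℕ → ZMod n := fun j =>
      if h1 : j ≤ t₀ then δ ⟨j, by omega⟩
      else if h2 : j - (t₀+1) < K then c ⟨j - (t₀+1), h2⟩ else i with hπhm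
    have hπhm0 : πhm 0 = i := by
      rw [hπhm]
      dsimp only
      rw [dif_pos (by omega)]
      rw [← hδ0]
      congr 1
    set a := πhm T with ha
    set H := ∑ k ∈ Finset.range T, (((πhm k).val:ℤ) - ((πhm (k+1)).val:ℤ))^2 with hH
    have hpar : n % 2 = 0 → (((p:ℤ) - H) - (a.val:ℤ) - (f.val:ℤ)) % 2 = 0 := by
      intro h2
      have hp2 := hZ.2 h2
      have htel := tele_par (fun k => ((πhm k).val : ℤ)) T
      rw [← hH] at htel
      simp only [hπhm0, ← ha] at htel
      omega
    obtain ⟨τ, hτ0, hτf, hτp⟩ := tail_exists n hn a f ((p:ℤ) - H) hpar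
    set π : ℕ → ZMod n := fun j => if j ≤ T then πhm j else τ (j - T) with hπ
    have hπle : ∀ j, j ≤ T → π j = πhm j := by
      intro j hj
      rw [hπ]; dsimp only; rw [if_pos hj]
    have hπτ : ∀ k, k ≤ 2*n-1 → π (T + k) = τ k := by
      intro k hk
      rcases Nat.eq_zero_or_pos k with rfl | hkpos
      · rw [hπ]; dsimp only
        rw [if_pos (by omega), hτ0, ha, Nat.add_zero]
      · rw [hπ]; dsimp only
        rw [if_neg (by omega)]
        congr 1
        omega
    refine ⟨fun j => π j.val, ?_, ?_, ?_, ?_, ?_⟩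
    · show π (0 : Fin (t+1)).val = i
      simp only [Fin.val_zero]
      rw [hπle 0 (by omega), hπhm0]
    · show π (Fin.last t).val = f
      simp only [Fin.val_last]
      rw [hπ]; dsimp only
      rw [if_neg (by omega)]
      exact hτf _ (by omega)
    · have hps : phaseSum n t (fun j : Fin (t+1) => π j.val)
          = ∑ k ∈ Finset.range t, (((π k).val:ℤ) - ((π (k+1)).val:ℤ))^2 := by
        rw [phaseSum]
        rw [← Fin.sum_univ_eq_sum_range (fun k => (((π k).val:ℤ) - ((π (k+1)).val:ℤ))^2) t]
        apply Finset.sum_congr rfl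
        intro k _
        rfl
      rw [hps]
      have hsplit : ∑ k ∈ Finset.range t, (((π k).val:ℤ) - ((π (k+1)).val:ℤ))^2
          = H + ∑ k ∈ Finset.range (2*n-1), (((τ k).val:ℤ) - ((τ (k+1)).val:ℤ))^2 := by
        rw [show t = T + (2*n-1) by omega, Finset.sum_range_add]
        congr 1
        · rw [hH]
          apply Finset.sum_congr rfl
          intro k hk
          simp only [Finset.mem_range] at hk
          rw [hπle k (by omega), hπle (k+1) (by omega)]
        · apply Finset.sum_congr rfl
          intro k hk
          simp only [Finset.mem_range] at hk
          rw [hπτ k (by omega), show T + k + 1 = T + (k+1) by omega, hπτ (k+1) (by omega)]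
      rw [hsplit]
      have hd : (nPrime n:ℤ) ∣ (H + ∑ k ∈ Finset.range (2*n-1),
          (((τ k).val:ℤ) - ((τ (k+1)).val:ℤ))^2 - (p:ℤ)) := by
        have e : H + ∑ k ∈ Finset.range (2*n-1),
            (((τ k).val:ℤ) - ((τ (k+1)).val:ℤ))^2 - (p:ℤ)
            = (∑ k ∈ Finset.range (2*n-1), (((τ k).val:ℤ) - ((τ (k+1)).val:ℤ))^2)
              - ((p:ℤ) - H) := by ring
        rw [e]
        exact Int.dvd_of_emod_eq_zero hτp
      have e2 : (H + ∑ k ∈ Finset.range (2*n-1),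
          (((τ k).val:ℤ) - ((τ (k+1)).val:ℤ))^2) % (nPrime n:ℤ) = (p:ℤ) % (nPrime n:ℤ) :=
        Int.emod_eq_emod_iff_emod_sub_eq_zero.mpr (Int.emod_eq_zero_of_dvd hd)
      rw [e2]
      exact Int.emod_eq_of_lt (by positivity) (by exact_mod_cast hZ.1)
    · intro k
      show π (Fin.castLE (by omega) k).val = δ k
      have hk := k.isLt
      have hv : (Fin.castLE (by omega : t₀+1 ≤ t+1) k).val = k.val := rfl
      rw [hv, hπle k.val (by omega), hπhm]
      dsimp only
      rw [dif_pos (by omega)]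
    · intro k
      show π (Fin.castLE (by omega) (k.addNat (t₀+1))).val = c k
      have hk := k.isLt
      have hv : (Fin.castLE (by omega : K + (t₀+1) ≤ t+1) (k.addNat (t₀+1))).val
          = k.val + (t₀+1) := rfl
      rw [hv, hπle _ (by omega), hπhm]
      dsimp only
      rw [dif_neg (by omega), dif_pos (by omega)]
      congr 1
      exact Fin.ext (by simp)
  -- counting via injection
  set S1 := {γ : Fin (t₀+1) → ZMod n | γ ∈ E ∧ γ 0 = i} with hS1
  set S2 := {γ : Fin (t+1) → ZMod n |
    restrictPath n (by omega) γ ∈ E ∧ γ 0 = i ∧ γ (Fin.last t) = f ∧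
    phaseSum n t γ % (nPrime n : ℤ) = (p : ℤ)} with hS2
  have hsc : sCount n t (by omega) E i f p = S2.ncard := rfl
  rw [hsc]
  have key2 : ∀ (x : S1) (c : Fin K → ZMod n),
      ∃ γ : Fin (t+1) → ZMod n, γ ∈ S2 ∧
        (∀ k : Fin (t₀+1), γ (Fin.castLE (by omega) k) = x.1 k) ∧
        (∀ k : Fin K, γ (Fin.castLE (by omega) (k.addNat (t₀+1))) = c k) := by
    intro x c
    obtain ⟨γ, h1, h2, h3, h4, h5⟩ := key x.1 x.2.1 x.2.2 c
    refine ⟨γ, ⟨?_, h1, h2, h3⟩, h4, h5⟩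
    have hres : restrictPath n (by omega : t₀ ≤ t) γ = x.1 := by
      funext k
      exact h4 k
    rw [hres]
    exact x.2.1
  choose g hg using key2
  have hmem : ∀ x c, g x c ∈ S2 := fun x c => (hg x c).1
  let F : S1 × (Fin K → ZMod n) → S2 := fun z => ⟨g z.1 z.2, hmem z.1 z.2⟩
  have hinj : Function.Injective F := by
    intro z w hzw
    have hgz : g z.1 z.2 = g w.1 w.2 := congrArg Subtype.val hzw
    have e1 : z.1 = w.1 := by
      apply Subtype.ext
      funext k
      rw [← (hg z.1 z.2).2.1 k, ← (hg w.1 w.2).2.1 k, hgz]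
    have e2 : z.2 = w.2 := by
      funext k
      rw [← (hg z.1 z.2).2.2 k, ← (hg w.1 w.2).2.2 k, hgz]
    exact Prod.ext e1 e2
  calc S1.ncard * n ^ K = Nat.card ↥S1 * Nat.card (Fin K → ZMod n) := by
        congr 1
        simp [Nat.card_eq_fintype_card, ZMod.card]
    _ = Nat.card (↥S1 × (Fin K → ZMod n)) := (Nat.card_prod _ _).symm
    _ ≤ Nat.card ↥S2 := Nat.card_le_card_of_injective F hinj
    _ = S2.ncard := rfl
end

section
/- Fix an odd integer n > 1, arbitrary initial amplitudes ψ : ℤ_n → ℂ, and a set E of t₀-paths (a time-finite event with defining data (t₀, E)). Let t ≥ t₀. If for each pair i, f ∈ ℤ_n the counts s^t_{ifp}(E) are equal for all p ∈ ℤ_n (i.e. independent of p), then E is null: μ_t(E) = 0. -/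
open scoped Classical

/-- Natural-number phase exponent. -/
def phaseNat (n : ℕ) [NeZero n] (t : ℕ) (γ : Fin (t + 1) → ZMod n) : ℕ :=
  ∑ k : Fin t, (((γ k.castSucc).val : ℤ) - ((γ k.succ).val : ℤ)).natAbs ^ 2

lemma phaseNat_cast (n : ℕ) [NeZero n] (t : ℕ) (γ : Fin (t + 1) → ZMod n) :
    (phaseNat n t γ : ℤ) = phaseSum n t γ := by
  unfold phaseNat phaseSum
  push_cast
  refine Finset.sum_congr rfl fun k _ => ?_
  rw [sq_abs]

lemma amp_eq (n : ℕ) [NeZero n] (ψ : ZMod n → ℂ) (t : ℕ) (γ : Fin (t + 1) → ZMod n) :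
    amp n ψ t γ = ψ (γ 0) * omegaN n ^ phaseNat n t γ / (Real.sqrt n : ℂ) ^ t := by
  unfold amp hopperU phaseNat
  rw [Finset.prod_div_distrib, Finset.prod_pow_eq_pow_sum, Finset.prod_const,
    Finset.card_univ, Fintype.card_fin, mul_div_assoc]

lemma omega_prim (n : ℕ) [NeZero n] (hodd : Odd n) :
    IsPrimitiveRoot (omegaN n) n := by
  have : omegaN n = Complex.exp (2 * Real.pi * Complex.I / n) := by
    rw [omegaN, if_neg (Nat.not_even_iff_odd.mpr hodd), efn]
    push_cast
    ring_nf
  rw [this]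
  exact Complex.isPrimitiveRoot_exp n (NeZero.ne n)

/-- For odd `n` and any initial amplitudes: if for each `i, f` the
counts `s^t_{ifp}(E)` are equal for all `p ∈ ℤ_n`, then `E` is null: `μ_t(E) = 0`. -/

theorem stmt13 (n : ℕ) [NeZero n] (hn : 1 < n) (hodd : Odd n) (ψ : ZMod n → ℂ)
    {t₀ : ℕ} (E : Set (Fin (t₀ + 1) → ZMod n)) (t : ℕ) (h : t₀ ≤ t)
    (hs : ∀ i f : ZMod n, ∀ p < n, ∀ q < n,
      sCount n t h E i f p = sCount n t h E i f q) :
    mu n ψ t {γ : Fin (t + 1) → ZMod n | restrictPath n h γ ∈ E} = 0 := by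
  classical
  have hnpos : 0 < n := Nat.pos_of_ne_zero (NeZero.ne n)
  have hprim := omega_prim n hodd
  have hω1 : omegaN n ≠ 1 := hprim.ne_one hn
  have hωn : omegaN n ^ n = 1 := hprim.pow_eq_one
  have hpowmod : ∀ m : ℕ, omegaN n ^ m = omegaN n ^ (m % n) := by
    intro m
    conv_lhs => rw [← Nat.mod_add_div m n]
    rw [pow_add, pow_mul, hωn, one_pow, mul_one]
  have hroots : ∑ p ∈ Finset.range n, omegaN n ^ p = 0 := by
    have := geom_sum_eq hω1 n
    rw [this, hωn, sub_self, zero_div]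
  have hnp : (nPrime n : ℤ) = (n : ℤ) := by
    rw [nPrime, if_neg (Nat.not_even_iff_odd.mpr hodd)]
  set c : ℂ := (Real.sqrt n : ℂ) ^ t with hc
  -- key: the inner sum vanishes for each f
  have key : ∀ f : ZMod n,
      (∑ γ : Fin (t + 1) → ZMod n,
        if γ ∈ {γ : Fin (t + 1) → ZMod n | restrictPath n h γ ∈ E} ∧ γ (Fin.last t) = f
        then amp n ψ t γ else 0) = 0 := by
    intro f
    have step1 : ∀ γ : Fin (t + 1) → ZMod n,
        (if γ ∈ {γ : Fin (t + 1) → ZMod n | restrictPath n h γ ∈ E} ∧ γ (Fin.last t) = f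
          then amp n ψ t γ else 0)
        = ∑ i : ZMod n, ∑ p ∈ Finset.range n,
            if restrictPath n h γ ∈ E ∧ γ 0 = i ∧ γ (Fin.last t) = f ∧
                phaseNat n t γ % n = p
            then ψ i * omegaN n ^ p / c else 0 := by
      intro γ
      by_cases hP : restrictPath n h γ ∈ E ∧ γ (Fin.last t) = f
      · rw [if_pos (by simpa using hP)]
        rw [Finset.sum_eq_single (γ 0)]
        · rw [Finset.sum_eq_single (phaseNat n t γ % n)]
          · rw [if_pos ⟨hP.1, rfl, hP.2, rfl⟩, amp_eq, hpowmod]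
          · intro p _ hp
            rw [if_neg]
            rintro ⟨-, -, -, h4⟩
            exact hp h4.symm
          · intro hmem
            exact absurd (Finset.mem_range.2 (Nat.mod_lt _ hnpos)) hmem
        · intro i _ hi
          refine Finset.sum_eq_zero fun p _ => ?_
          rw [if_neg]
          rintro ⟨-, h2, -⟩
          exact hi h2.symm
        · intro hmem
          exact absurd (Finset.mem_univ _) hmem
      · rw [if_neg (by simpa using hP)]
        refine (Finset.sum_eq_zero fun i _ => Finset.sum_eq_zero fun p _ => ?_).symm
        rw [if_neg]
        rintro ⟨h1, -, h3, -⟩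
        exact hP ⟨h1, h3⟩
    rw [Finset.sum_congr rfl fun γ _ => step1 γ]
    rw [Finset.sum_comm]
    refine Finset.sum_eq_zero fun i _ => ?_
    rw [Finset.sum_comm]
    have count : ∀ p < n,
        (∑ γ : Fin (t + 1) → ZMod n,
          if restrictPath n h γ ∈ E ∧ γ 0 = i ∧ γ (Fin.last t) = f ∧
              phaseNat n t γ % n = p
          then ψ i * omegaN n ^ p / c else 0)
        = (sCount n t h E i f p : ℂ) * (ψ i * omegaN n ^ p / c) := by
      intro p hp
      rw [← Finset.sum_filter, Finset.sum_const, nsmul_eq_mul]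
      congr 1
      norm_cast
      rw [sCount, Set.ncard_eq_toFinset_card', Set.toFinset_setOf]
      congr 1
      ext γ
      simp only [Finset.mem_filter, Finset.mem_univ, true_and]
      constructor
      · rintro ⟨h1, h2, h3, h4⟩
        refine ⟨h1, h2, h3, ?_⟩
        rw [← phaseNat_cast, hnp, ← h4]
        push_cast
        rfl
      · rintro ⟨h1, h2, h3, h4⟩
        refine ⟨h1, h2, h3, ?_⟩
        rw [← phaseNat_cast, hnp] at h4
        exact_mod_cast h4
    rw [Finset.sum_congr rfl fun p hp => count p (Finset.mem_range.mp hp)]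
    have : ∀ p ∈ Finset.range n,
        (sCount n t h E i f p : ℂ) * (ψ i * omegaN n ^ p / c)
        = ((sCount n t h E i f 0 : ℂ) * ψ i / c) * omegaN n ^ p := by
      intro p hp
      rw [hs i f p (Finset.mem_range.mp hp) 0 hnpos]
      ring
    rw [Finset.sum_congr rfl this, ← Finset.mul_sum, hroots, mul_zero]
  unfold mu
  rw [Finset.sum_congr rfl fun f _ => by rw [key f]]
  simp
end
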